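/- Let r ≥ 1 and t ≥ 1 be natural numbers, let p be a probability mass function on a finite set of r items with minimum probability p_min = min_i p_i, and let X₁, …, X_t be independent random variables each distributed according to p. Let l be an integer with 2 ≤ l ≤ r. Then the probability that fewer than l − 1 distinct items appear among X₁, …, X_t is at most Σ_i (1 − p_i)^t / (r − l + 2), and hence at most r·(1 − p_min)^t / 2. -/

import Mathlib

open MeasureTheory ProbabilityTheory

/-- **Few-distinct-items probability bound.**  If `X₁, …, X_t` are i.i.d. draws from a
distribution `p` on `r` items with minimum probability `p_min`, and `2 ≤ l ≤ r`, then the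
probability that fewer than `l − 1` distinct items appear is at most
`∑ᵢ (1 − pᵢ)^t / (r − l + 2)`, and hence at most `r·(1 − p_min)^t / 2`. -/
theorem few_distinct_items_prob {r t : ℕ} (hr : 1 ≤ r) (ht : 1 ≤ t)
    {Ω : Type*} [MeasurableSpace Ω] (μ : Measure Ω) [IsProbabilityMeasure μ]
    (p : Measure (Fin r)) [IsProbabilityMeasure p]
    (X : Fin t → Ω → Fin r) (hmeas : ∀ s, Measurable (X s))
    (hindep : iIndepFun X μ)
    (hlaw : ∀ s, Measure.map (X s) μ = p)
    (l : ℕ) (hl2 : 2 ≤ l) (hlr : l ≤ r)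
    (pmin : ℝ) (hpmin : pmin = ⨅ i : Fin r, (p {i}).toReal) :
    (μ {ω | (Finset.image (fun s => X s ω) Finset.univ).card < l - 1}).toReal
        ≤ (∑ i : Fin r, (1 - (p {i}).toReal) ^ t) / ((r : ℝ) - l + 2) ∧
      (μ {ω | (Finset.image (fun s => X s ω) Finset.univ).card < l - 1}).toReal
        ≤ r * (1 - pmin) ^ t / 2 := by
  classical
  set E : Set Ω := {ω | (Finset.image (fun s => X s ω) Finset.univ).card < l - 1} with hE
  have hF : Measurable (fun ω (s : Fin t) => X s ω) := measurable_pi_lambda _ hmeas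
  have hEmeas : MeasurableSet E := by
    have h : E = (fun ω (s : Fin t) => X s ω) ⁻¹'
        {f : Fin t → Fin r | (Finset.image f Finset.univ).card < l - 1} := rfl
    rw [h]
    exact hF ((Set.toFinite _).measurableSet)
  set k : ℕ := r - l + 2 with hk
  set A : Fin r → Set Ω := fun i => {ω | ∀ s, X s ω ≠ i} with hA
  have hAmeas : ∀ i, MeasurableSet (A i) := by
    intro i
    have h : A i = ⋂ s, X s ⁻¹' ({i}ᶜ : Set (Fin r)) := by
      ext ω; simp [hA]
    rw [h]
    exact MeasurableSet.iInter fun s => (hmeas s) (measurableSet_singleton i).compl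
  have hAmeasure : ∀ i, μ (A i) = (1 - p {i}) ^ t := by
    intro i
    have h1 : A i = ⋂ s ∈ Finset.univ, X s ⁻¹' ({i}ᶜ : Set (Fin r)) := by
      ext ω; simp [hA]
    rw [h1, (iIndepFun_iff_measure_inter_preimage_eq_mul.mp hindep) Finset.univ
        (fun s _ => (measurableSet_singleton i).compl)]
    have h2 : ∀ s : Fin t, μ (X s ⁻¹' ({i}ᶜ : Set (Fin r))) = 1 - p {i} := by
      intro s
      rw [← Measure.map_apply (hmeas s) (measurableSet_singleton i).compl, hlaw s,
        prob_compl_eq_one_sub (measurableSet_singleton i)]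
    simp only [h2]
    simp [Finset.prod_const]
  -- counting: on E at least k of the events A i hold
  have hcount : ∀ ω ∈ E, k ≤ (Finset.univ.filter (fun i => ω ∈ A i)).card := by
    intro ω hω
    have hfilt : Finset.univ.filter (fun i => ω ∈ A i)
        = (Finset.image (fun s => X s ω) Finset.univ)ᶜ := by
      ext i
      simp [hA, eq_comm]
    have hcard : (Finset.univ.filter (fun i => ω ∈ A i)).card
        = r - (Finset.image (fun s => X s ω) Finset.univ).card := by
      rw [hfilt, Finset.card_compl, Fintype.card_fin]
    have him : (Finset.image (fun s => X s ω) Finset.univ).card < l - 1 := hω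
    omega
  -- Markov-type bound in ENNReal
  have key : (k : ENNReal) * μ E ≤ ∑ i : Fin r, μ (A i) := by
    have h1 : (k : ENNReal) * μ E = ∫⁻ ω, E.indicator (fun _ => (k : ENNReal)) ω ∂μ := by
      rw [lintegral_indicator_const hEmeas]
    have h2 : ∀ ω, E.indicator (fun _ => (k : ENNReal)) ω
        ≤ ∑ i : Fin r, (A i ∩ E).indicator (fun _ => (1 : ENNReal)) ω := by
      intro ω
      by_cases hω : ω ∈ E
      · have hsum : ∑ i : Fin r, (A i ∩ E).indicator (fun _ => (1 : ENNReal)) ω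
            = ((Finset.univ.filter (fun i => ω ∈ A i ∩ E)).card : ENNReal) := by
          rw [Finset.card_filter]
          push_cast
          refine Finset.sum_congr rfl fun i _ => ?_
          by_cases h : ω ∈ A i ∩ E <;> simp [Set.indicator, h]
        have hfe : Finset.univ.filter (fun i => ω ∈ A i ∩ E)
            = Finset.univ.filter (fun i => ω ∈ A i) := by
          ext i; simp [hω]
        rw [hsum, hfe, Set.indicator_of_mem hω]
        exact_mod_cast Nat.cast_le.mpr (hcount ω hω)
      · simp [Set.indicator_of_notMem hω]
    calc (k : ENNReal) * μ E = ∫⁻ ω, E.indicator (fun _ => (k : ENNReal)) ω ∂μ := h1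
      _ ≤ ∫⁻ ω, ∑ i : Fin r, (A i ∩ E).indicator (fun _ => (1 : ENNReal)) ω ∂μ :=
          lintegral_mono h2
      _ = ∑ i : Fin r, μ (A i ∩ E) := by
          rw [lintegral_finset_sum]
          · refine Finset.sum_congr rfl fun i _ => ?_
            rw [lintegral_indicator_const ((hAmeas i).inter hEmeas), one_mul]
          · exact fun i _ => measurable_const.indicator ((hAmeas i).inter hEmeas)
      _ ≤ ∑ i : Fin r, μ (A i) :=
          Finset.sum_le_sum fun i _ => measure_mono Set.inter_subset_left
  -- pass to real numbers
  have hp_le_one : ∀ i : Fin r, p {i} ≤ 1 := fun i => prob_le_one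
  have hAtoReal : ∀ i : Fin r, ((1 - p {i}) ^ t).toReal = (1 - (p {i}).toReal) ^ t := by
    intro i
    rw [ENNReal.toReal_pow, ENNReal.toReal_sub_of_le (hp_le_one i) ENNReal.one_ne_top,
      ENNReal.toReal_one]
  have hsumfin : (∑ i : Fin r, μ (A i)) ≠ ⊤ := by
    refine ENNReal.sum_ne_top.mpr fun i _ => ?_
    exact (measure_ne_top μ _)
  have keyR : (k : ℝ) * (μ E).toReal ≤ ∑ i : Fin r, (1 - (p {i}).toReal) ^ t := by
    have h := ENNReal.toReal_mono hsumfin key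
    rw [ENNReal.toReal_mul, ENNReal.toReal_sum (fun i _ => measure_ne_top μ _)] at h
    simp only [ENNReal.toReal_natCast] at h
    calc (k : ℝ) * (μ E).toReal ≤ ∑ i : Fin r, (μ (A i)).toReal := h
      _ = ∑ i : Fin r, (1 - (p {i}).toReal) ^ t := by
          refine Finset.sum_congr rfl fun i _ => ?_
          rw [hAmeasure i, hAtoReal i]
  have hkcast : (k : ℝ) = (r : ℝ) - l + 2 := by
    rw [hk]
    push_cast [Nat.cast_sub hlr]
    ring
  have hk2 : (2 : ℝ) ≤ (k : ℝ) := by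
    have : 2 ≤ k := by omega
    exact_mod_cast this
  have hkpos : (0 : ℝ) < (k : ℝ) := by linarith
  have hmE : (0 : ℝ) ≤ (μ E).toReal := ENNReal.toReal_nonneg
  -- term nonnegativity and pmin bounds
  have hterm_nonneg : ∀ i : Fin r, (0 : ℝ) ≤ 1 - (p {i}).toReal := by
    intro i
    have : (p {i}).toReal ≤ 1 := by
      rw [← ENNReal.toReal_one]
      exact ENNReal.toReal_mono ENNReal.one_ne_top (hp_le_one i)
    linarith
  have hS_nonneg : (0 : ℝ) ≤ ∑ i : Fin r, (1 - (p {i}).toReal) ^ t :=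
    Finset.sum_nonneg fun i _ => pow_nonneg (hterm_nonneg i) t
  have first : (μ E).toReal ≤ (∑ i : Fin r, (1 - (p {i}).toReal) ^ t) / ((r : ℝ) - l + 2) := by
    rw [← hkcast, le_div_iff₀ hkpos]
    linarith [keyR]
  refine ⟨first, ?_⟩
  -- second bound
  haveI : Nonempty (Fin r) := ⟨⟨0, hr⟩⟩
  have hpmin_le : ∀ i : Fin r, pmin ≤ (p {i}).toReal := by
    intro i
    rw [hpmin]
    exact ciInf_le (Set.Finite.bddBelow (Set.finite_range _)) i
  have hS_le : (∑ i : Fin r, (1 - (p {i}).toReal) ^ t) ≤ r * (1 - pmin) ^ t := by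
    calc (∑ i : Fin r, (1 - (p {i}).toReal) ^ t)
        ≤ ∑ _i : Fin r, (1 - pmin) ^ t := by
          refine Finset.sum_le_sum fun i _ => ?_
          exact pow_le_pow_left₀ (hterm_nonneg i) (by linarith [hpmin_le i]) t
      _ = r * (1 - pmin) ^ t := by
          rw [Finset.sum_const, Finset.card_univ, Fintype.card_fin, nsmul_eq_mul]
  calc (μ E).toReal ≤ (∑ i : Fin r, (1 - (p {i}).toReal) ^ t) / ((r : ℝ) - l + 2) := first
    _ ≤ (∑ i : Fin r, (1 - (p {i}).toReal) ^ t) / 2 := by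
        rw [← hkcast]
        exact div_le_div_of_nonneg_left hS_nonneg (by norm_num) hk2
    _ ≤ r * (1 - pmin) ^ t / 2 := by
        apply div_le_div_of_nonneg_right hS_le  -- maybe wrong name
        norm_num
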